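/- Let Γ be a finite-index subgroup of ℤ², let e₁ = (1,0), e₂ = (0,1), and let α₁, α₂, α₃ : ℤ² → ℍ∖{0} be Γ-periodic functions. Fix a ℤ-basis (γ, η) of Γ, which identifies the group of homomorphisms h : Γ → ℂˣ with ℂˣ × ℂˣ via h ↦ (h(γ), h(η)). Then there exists a polynomial p ∈ ℂ[X,Y], not identically zero, such that for every homomorphism h : Γ → ℂˣ the following are equivalent: (i) there exists a nonzero holomorphic section with monodromy h; (ii) p(h(γ), h(η)) = 0. Moreover the set of such h (the spectrum) is nonempty. (This is the content of Lemma 4.13: the spectrum of a quaternionic holomorphic line bundle over a discrete torus with regular combinatorics is a nonempty one-dimensional algebraic subset of Hom(Γ, ℂˣ) ≅ ℂˣ × ℂˣ.) -/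

import Mathlib

noncomputable section

/-- The quaternions. -/
abbrev H : Type := Quaternion ℝ

/-- The embedding of `ℂ` into the quaternions as the real subalgebra spanned by `1` and `i`. -/
def toH (z : ℂ) : H := ⟨z.re, z.im, 0, 0⟩

/-- The lattice vector `e₁ = (1,0)`. -/
def e₁ : ℤ × ℤ := (1, 0)

/-- The lattice vector `e₂ = (0,1)`. -/
def e₂ : ℤ × ℤ := (0, 1)

/-- `ψ : ℤ² → ℍ` is a holomorphic section with monodromy `h : Γ → ℂˣ` of the quaternionic
holomorphic line bundle over the discrete torus `ℤ²/Γ` modeled by the coefficient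
functions `α₁, α₂, α₃`. -/
def IsHoloSection (Γ : AddSubgroup (ℤ × ℤ)) (α₁ α₂ α₃ : ℤ × ℤ → H)
    (h : Γ → ℂˣ) (ψ : ℤ × ℤ → H) : Prop :=
  (∀ v : ℤ × ℤ, α₁ v * ψ v + α₂ v * ψ (v + e₁) + α₃ v * ψ (v + e₂) = 0) ∧
  (∀ x : ℤ × ℤ, ∀ g : Γ, ψ (x + (g : ℤ × ℤ)) = ψ x * toH (h g))

namespace QHL

open Matrix

/-- first complex coordinate of a quaternion, `x = π₁ x + j π₂ x`. -/
def pi1 (x : H) : ℂ := ⟨x.re, x.imI⟩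
def pi2 (x : H) : ℂ := ⟨x.imJ, -x.imK⟩

def piv (x : H) : Fin 2 → ℂ := ![pi1 x, pi2 x]

def ofC (v : Fin 2 → ℂ) : H := ⟨(v 0).re, (v 0).im, (v 1).re, -(v 1).im⟩

def mq (α : H) : Matrix (Fin 2) (Fin 2) ℂ :=
  ![![pi1 α, -(starRingEnd ℂ) (pi2 α)], ![pi2 α, (starRingEnd ℂ) (pi1 α)]]

@[simp] lemma piv_ofC (v : Fin 2 → ℂ) : piv (ofC v) = v := by
  funext b
  fin_cases b <;> simp [piv, ofC, pi1, pi2, Complex.ext_iff]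

@[simp] lemma ofC_piv (x : H) : ofC (piv x) = x := by
  ext <;> simp [piv, ofC, pi1, pi2]

lemma piv_eq_zero {x : H} (h : ∀ b, piv x b = 0) : x = 0 := by
  have h0 := h 0
  have h1 := h 1
  simp [piv, pi1, pi2, Complex.ext_iff] at h0 h1
  ext <;> simp [h0, h1, Quaternion.re_zero, Quaternion.imI_zero, Quaternion.imJ_zero, Quaternion.imK_zero]

@[simp] lemma toH_mul (z w : ℂ) : toH (z * w) = toH z * toH w := by
  ext <;> simp only [Quaternion.re_mul, Quaternion.imI_mul, Quaternion.imJ_mul,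
    Quaternion.imK_mul] <;> simp [toH, Complex.mul_re, Complex.mul_im]

@[simp] lemma toH_one : toH 1 = 1 := by
  ext <;> simp [toH, Quaternion.re_one, Quaternion.imI_one, Quaternion.imJ_one, Quaternion.imK_one]

@[simp] lemma toH_zero : toH 0 = 0 := by
  ext <;> simp [toH, Quaternion.re_zero, Quaternion.imI_zero, Quaternion.imJ_zero, Quaternion.imK_zero]

lemma toH_eq_zero {z : ℂ} : toH z = 0 ↔ z = 0 := by
  constructor
  · intro h
    have := congrArg QuaternionAlgebra.re h
    have := congrArg QuaternionAlgebra.imI h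
    simp [toH] at *
    exact Complex.ext (by assumption) (by assumption)
  · rintro rfl; simp

lemma piv_mul_toH (x : H) (c : ℂ) : ∀ b, piv (x * toH c) b = piv x b * c := by
  intro b
  fin_cases b <;>
    simp [piv, pi1, pi2, Quaternion.re_mul, Quaternion.imI_mul, Quaternion.imJ_mul,
      Quaternion.imK_mul, Complex.ext_iff, Complex.mul_re, Complex.mul_im] <;> simp [toH] <;> ring

lemma piv_lmul (α x : H) : ∀ a, piv (α * x) a = ∑ b : Fin 2, mq α a b * piv x b := by
  intro a
  fin_cases a <;>
    simp [piv, mq, pi1, pi2, Fin.sum_univ_two, Quaternion.re_mul, Quaternion.imI_mul,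
      Quaternion.imJ_mul, Quaternion.imK_mul, Complex.ext_iff, Complex.mul_re,
      Complex.mul_im] <;> constructor <;> ring

lemma piv_add (x y : H) (a : Fin 2) : piv (x + y) a = piv x a + piv y a := by
  fin_cases a <;> simp [piv, pi1, pi2, Complex.ext_iff] <;> ring

@[simp] lemma piv_zero (a : Fin 2) : piv 0 a = 0 := by
  fin_cases a <;> simp [piv, pi1, pi2, Complex.ext_iff, Quaternion.re_zero, Quaternion.imI_zero, Quaternion.imJ_zero, Quaternion.imK_zero]

lemma norm_toH (c : ℂ) : ‖toH c‖ = ‖c‖ := by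
  rw [norm_eq_sqrt_real_inner, Quaternion.inner_self, Quaternion.normSq_def']
  simp [toH, Complex.norm_def, Complex.normSq_apply, sq]

end QHL

section Abstract

open Matrix QHL

variable {Q : Type} 

/-- The quaternionic linear system with coefficient quaternions `A1 A2 A3`,
combinatorics `τ1 τ2` and complex twists `c1 c2 c3`. -/
def SysSol (A1 A2 A3 : Q → H) (τ1 τ2 : Q → Q) (c1 c2 c3 : Q → ℂ) (f : Q → H) : Prop :=
  ∀ q, A1 q * (f q * toH (c1 q)) + A2 q * (f (τ1 q) * toH (c2 q))
      + A3 q * (f (τ2 q) * toH (c3 q)) = 0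

/-- The generic matrix of the system, over any commutative ring. -/
def Mmat {R : Type*} [CommRing R] [DecidableEq Q]
    (m1 m2 m3 : Q → Matrix (Fin 2) (Fin 2) R) (τ1 τ2 : Q → Q) (c1 c2 c3 : Q → R) :
    Matrix (Q × Fin 2) (Q × Fin 2) R := fun p p' =>
  (if p'.1 = p.1 then c1 p.1 * m1 p.1 p.2 p'.2 else 0) +
  (if p'.1 = τ1 p.1 then c2 p.1 * m2 p.1 p.2 p'.2 else 0) +
  (if p'.1 = τ2 p.1 then c3 p.1 * m3 p.1 p.2 p'.2 else 0)

lemma Mmat_map {R S : Type*} [CommRing R] [CommRing S] [DecidableEq Q]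
    (φ : R →+* S) (m1 m2 m3 : Q → Matrix (Fin 2) (Fin 2) R) (τ1 τ2 : Q → Q)
    (c1 c2 c3 : Q → R) :
    (Mmat m1 m2 m3 τ1 τ2 c1 c2 c3).map φ =
      Mmat (fun q => (m1 q).map φ) (fun q => (m2 q).map φ) (fun q => (m3 q).map φ)
        τ1 τ2 (φ ∘ c1) (φ ∘ c2) (φ ∘ c3) := by
  ext p p'
  simp [Mmat, Matrix.map_apply, apply_ite φ]

variable [Fintype Q] [DecidableEq Q]

lemma mulVec_Mmat (A1 A2 A3 : Q → H) (τ1 τ2 : Q → Q) (c1 c2 c3 : Q → ℂ)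
    (F : Q × Fin 2 → ℂ) (q : Q) (a : Fin 2) :
    ((Mmat (fun q => mq (A1 q)) (fun q => mq (A2 q)) (fun q => mq (A3 q))
        τ1 τ2 c1 c2 c3) *ᵥ F) (q, a) =
      piv (A1 q * (ofC (fun b => F (q, b)) * toH (c1 q))
        + A2 q * (ofC (fun b => F (τ1 q, b)) * toH (c2 q))
        + A3 q * (ofC (fun b => F (τ2 q, b)) * toH (c3 q))) a := by
  rw [Matrix.mulVec, dotProduct]
  rw [Fintype.sum_prod_type]
  have key : ∀ (A : H) (c : ℂ) (v : Fin 2 → ℂ),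
      piv (A * (ofC v * toH c)) a = ∑ b : Fin 2, c * mq A a b * v b := by
    intro A c v
    rw [piv_lmul]
    congr 1
    funext b
    rw [piv_mul_toH, piv_ofC]
    ring
  rw [piv_add, piv_add, key, key, key]
  rw [← Finset.sum_add_distrib, ← Finset.sum_add_distrib]
  -- now exchange: LHS is ∑_q' ∑_b entry * F (q',b)
  have : ∀ q' : Q, ∑ b : Fin 2,
      (Mmat (fun q => mq (A1 q)) (fun q => mq (A2 q)) (fun q => mq (A3 q))
        τ1 τ2 c1 c2 c3) (q, a) (q', b) * F (q', b) =
      ((if q' = q then ∑ b : Fin 2, c1 q * mq (A1 q) a b * F (q', b) else 0) +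
       (if q' = τ1 q then ∑ b : Fin 2, c2 q * mq (A2 q) a b * F (q', b) else 0) +
       (if q' = τ2 q then ∑ b : Fin 2, c3 q * mq (A3 q) a b * F (q', b) else 0)) := by
    intro q'
    simp only [Mmat]
    by_cases h1 : q' = q <;> by_cases h2 : q' = τ1 q <;> by_cases h3 : q' = τ2 q <;>
      simp [h1, h2, h3, add_mul, Finset.sum_add_distrib]
  rw [Finset.sum_congr rfl (fun q' _ => this q')]
  simp [Finset.sum_add_distrib, Finset.sum_ite_eq']

lemma exists_sys_iff_det (A1 A2 A3 : Q → H) (τ1 τ2 : Q → Q) (c1 c2 c3 : Q → ℂ) :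
    (∃ f : Q → H, f ≠ 0 ∧ SysSol A1 A2 A3 τ1 τ2 c1 c2 c3 f) ↔
      (Mmat (fun q => mq (A1 q)) (fun q => mq (A2 q)) (fun q => mq (A3 q))
        τ1 τ2 c1 c2 c3).det = 0 := by
  rw [← Matrix.exists_mulVec_eq_zero_iff]
  constructor
  · rintro ⟨f, hf, hsol⟩
    refine ⟨fun p => piv (f p.1) p.2, ?_, ?_⟩
    · intro h0
      apply hf
      funext q
      apply piv_eq_zero
      intro b
      exact congrFun h0 (q, b)
    · funext p
      obtain ⟨q, a⟩ := p
      rw [mulVec_Mmat]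
      simp only [ofC_piv]
      rw [hsol q]
      simp
  · rintro ⟨F, hF, hker⟩
    refine ⟨fun q => ofC (fun b => F (q, b)), ?_, ?_⟩
    · intro h0
      apply hF
      funext p
      have := congrFun h0 p.1
      have h2 : piv (ofC fun b => F (p.1, b)) p.2 = 0 := by rw [this]; simp
      rwa [piv_ofC] at h2
    · intro q
      apply piv_eq_zero
      intro a
      have := congrFun hker (q, a)
      rw [mulVec_Mmat] at this
      simpa using this
  
end Abstract

section Torus

open QHL

variable (Γ : AddSubgroup (ℤ × ℤ))

/-- a set-theoretic section of the quotient map. -/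
def out (q : (ℤ × ℤ) ⧸ Γ) : ℤ × ℤ := Quotient.out q

@[simp] lemma mk_out (q : (ℤ × ℤ) ⧸ Γ) : (QuotientAddGroup.mk (out Γ q) : (ℤ × ℤ) ⧸ Γ) = q :=
  QuotientAddGroup.out_eq' q

/-- The lattice point `x` minus the chosen representative of its class, as an element of `Γ`. -/
def rel (x : ℤ × ℤ) : Γ :=
  ⟨x - out Γ (QuotientAddGroup.mk x), by
    have h : (QuotientAddGroup.mk (out Γ (QuotientAddGroup.mk x)) : (ℤ × ℤ) ⧸ Γ)
        = QuotientAddGroup.mk x := mk_out Γ _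
    have := QuotientAddGroup.eq.mp h
    simpa [neg_add_eq_sub] using this⟩

lemma out_add_rel (x : ℤ × ℤ) : out Γ (QuotientAddGroup.mk x) + (rel Γ x : ℤ × ℤ) = x := by
  simp [rel]

@[simp] lemma mk_add_coe (x : ℤ × ℤ) (g : Γ) :
    (QuotientAddGroup.mk (x + (g : ℤ × ℤ)) : (ℤ × ℤ) ⧸ Γ) = QuotientAddGroup.mk x :=
  QuotientAddGroup.mk_add_of_mem x g.2

lemma rel_add (x : ℤ × ℤ) (g : Γ) : rel Γ (x + (g : ℤ × ℤ)) = rel Γ x + g := by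
  apply Subtype.ext
  simp only [rel, mk_add_coe, AddSubgroup.coe_add]
  ring

@[simp] lemma rel_out (q : (ℤ × ℤ) ⧸ Γ) : rel Γ (out Γ q) = 0 := by
  apply Subtype.ext
  simp [rel]

/-- translation by `e₁` on the quotient. -/
def tau1 (q : (ℤ × ℤ) ⧸ Γ) : (ℤ × ℤ) ⧸ Γ := QuotientAddGroup.mk (out Γ q + e₁)

def tau2 (q : (ℤ × ℤ) ⧸ Γ) : (ℤ × ℤ) ⧸ Γ := QuotientAddGroup.mk (out Γ q + e₂)

lemma tau1_eq (q : (ℤ × ℤ) ⧸ Γ) : tau1 Γ q = q + QuotientAddGroup.mk e₁ := by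
  rw [tau1, QuotientAddGroup.mk_add, mk_out]

lemma tau2_eq (q : (ℤ × ℤ) ⧸ Γ) : tau2 Γ q = q + QuotientAddGroup.mk e₂ := by
  rw [tau2, QuotientAddGroup.mk_add, mk_out]

lemma tau1_surj : Function.Surjective (tau1 Γ) := fun q =>
  ⟨q - QuotientAddGroup.mk e₁, by rw [tau1_eq, sub_add_cancel]⟩

/-- the Γ-element relating `out q + e₁` with the representative of its class. -/
def rel2 (q : (ℤ × ℤ) ⧸ Γ) : Γ := rel Γ (out Γ q + e₁)

def rel3 (q : (ℤ × ℤ) ⧸ Γ) : Γ := rel Γ (out Γ q + e₂)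

/-- the extension of `f : Q → H` to a `h`-equivariant function on `ℤ²`. -/
def extend (h : Γ → ℂˣ) (f : (ℤ × ℤ) ⧸ Γ → H) (x : ℤ × ℤ) : H :=
  f (QuotientAddGroup.mk x) * toH (h (rel Γ x))

section Hom

variable {Γ}
variable {h : Γ → ℂˣ} (hadd : ∀ a b : Γ, h (a + b) = h a * h b)

include hadd

lemma hom_zero : h 0 = 1 := by
  have := hadd 0 0
  rw [add_zero] at this
  exact right_eq_mul.mp this

lemma extend_monodromy (f : (ℤ × ℤ) ⧸ Γ → H) (x : ℤ × ℤ) (g : Γ) :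
    extend Γ h f (x + (g : ℤ × ℤ)) = extend Γ h f x * toH (h g) := by
  rw [extend, extend, mk_add_coe, rel_add, hadd, Units.val_mul, toH_mul, mul_assoc]

lemma extend_out (f : (ℤ × ℤ) ⧸ Γ → H) (q : (ℤ × ℤ) ⧸ Γ) :
    extend Γ h f (out Γ q) = f q := by
  rw [extend, rel_out, hom_zero hadd, mk_out]
  simp

omit hadd in
lemma sect_apply {α₁ α₂ α₃ : ℤ × ℤ → H} {ψ : ℤ × ℤ → H}
    (hψ : IsHoloSection Γ α₁ α₂ α₃ h ψ) (x : ℤ × ℤ) :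
    ψ x = ψ (out Γ (QuotientAddGroup.mk x)) * toH (h (rel Γ x)) := by
  conv_lhs => rw [← out_add_rel Γ x]
  exact hψ.2 _ _

end Hom

end Torus

section Gauge

open QHL

variable {Q : Type} {A1 A2 A3 : Q → H} {τ1 τ2 : Q → Q}

lemma sysSol_rowmul {c1 c2 c3 u : Q → ℂ} {f : Q → H}
    (hsol : SysSol A1 A2 A3 τ1 τ2 c1 c2 c3 f) :
    SysSol A1 A2 A3 τ1 τ2 (fun q => c1 q * u q) (fun q => c2 q * u q)
      (fun q => c3 q * u q) f := by
  intro q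
  have E := congrArg (· * toH (u q)) (hsol q)
  simp only [add_mul, zero_mul, mul_assoc, ← toH_mul] at E ⊢
  exact E

lemma sysSol_rowmul_iff {c1 c2 c3 u : Q → ℂ} (hu : ∀ q, u q ≠ 0) (f : Q → H) :
    SysSol A1 A2 A3 τ1 τ2 (fun q => c1 q * u q) (fun q => c2 q * u q)
      (fun q => c3 q * u q) f ↔ SysSol A1 A2 A3 τ1 τ2 c1 c2 c3 f := by
  constructor
  · intro hs
    have := sysSol_rowmul (u := fun q => (u q)⁻¹) hs
    have e : ∀ c : Q → ℂ, (fun q => c q * u q * (u q)⁻¹) = c := by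
      intro c; funext q; exact mul_inv_cancel_right₀ (hu q) (c q)
    rwa [e c1, e c2, e c3] at this
  · exact sysSol_rowmul

lemma sysSol_gauge {c1 c2 c3 c1' c2' c3' w : Q → ℂ} {f : Q → H}
    (h1 : ∀ q, w q * c1' q = c1 q * w q)
    (h2 : ∀ q, w (τ1 q) * c2' q = c2 q * w q)
    (h3 : ∀ q, w (τ2 q) * c3' q = c3 q * w q)
    (hsol : SysSol A1 A2 A3 τ1 τ2 c1 c2 c3 f) :
    SysSol A1 A2 A3 τ1 τ2 c1' c2' c3' (fun q => f q * toH (w q)) := by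
  intro q
  have E := congrArg (· * toH (w q)) (hsol q)
  simp only [add_mul, zero_mul, mul_assoc, ← toH_mul] at E ⊢
  rw [h1, h2, h3]
  exact E

end Gauge

section SectionSys

open QHL

variable (Γ : AddSubgroup (ℤ × ℤ)) (α₁ α₂ α₃ : ℤ × ℤ → H)
variable (hper₁ : ∀ x : ℤ × ℤ, ∀ g : Γ, α₁ (x + (g : ℤ × ℤ)) = α₁ x)
variable (hper₂ : ∀ x : ℤ × ℤ, ∀ g : Γ, α₂ (x + (g : ℤ × ℤ)) = α₂ x)
variable (hper₃ : ∀ x : ℤ × ℤ, ∀ g : Γ, α₃ (x + (g : ℤ × ℤ)) = α₃ x)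
variable {h : Γ → ℂˣ} (hadd : ∀ a b : Γ, h (a + b) = h a * h b)

/-- the coefficient functions over the quotient -/
def Acoef (i : Fin 3) : (ℤ × ℤ) ⧸ Γ → H :=
  fun q => (if i = 0 then α₁ else if i = 1 then α₂ else α₃) (out Γ q)

include hper₁ in
lemma alpha_eq_out (x : ℤ × ℤ) : α₁ x = α₁ (out Γ (QuotientAddGroup.mk x)) := by
  conv_lhs => rw [← out_add_rel Γ x]
  exact hper₁ _ _

include hadd hper₁ hper₂ hper₃ in
lemma section_iff_sys :
    (∃ ψ : ℤ × ℤ → H, ψ ≠ 0 ∧ IsHoloSection Γ α₁ α₂ α₃ h ψ) ↔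
    (∃ f : (ℤ × ℤ) ⧸ Γ → H, f ≠ 0 ∧
      SysSol (fun q => α₁ (out Γ q)) (fun q => α₂ (out Γ q)) (fun q => α₃ (out Γ q))
        (tau1 Γ) (tau2 Γ) (fun _ => 1) (fun q => (h (rel2 Γ q) : ℂ))
        (fun q => (h (rel3 Γ q) : ℂ)) f) := by
  constructor
  · rintro ⟨ψ, hne, hψ⟩
    refine ⟨fun q => ψ (out Γ q), ?_, ?_⟩
    · intro h0
      apply hne
      funext x
      rw [sect_apply hψ x]
      have : ψ (out Γ (QuotientAddGroup.mk x)) = 0 := congrFun h0 _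
      rw [this, zero_mul]
      rfl
    · intro q
      have E := hψ.1 (out Γ q)
      rw [sect_apply hψ (out Γ q + e₁), sect_apply hψ (out Γ q + e₂)] at E
      simpa [toH_one, mul_one, tau1, tau2, rel2, rel3] using E
  · rintro ⟨f, hne, hsol⟩
    refine ⟨extend Γ h f, ?_, ?_, ?_⟩
    · intro h0
      apply hne
      funext q
      have : extend Γ h f (out Γ q) = 0 := congrFun h0 _
      rwa [extend_out hadd] at this
    · intro v
      have hv : v = out Γ (QuotientAddGroup.mk v) + (rel Γ v : ℤ × ℤ) :=
        (out_add_rel Γ v).symm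
      set q := QuotientAddGroup.mk (s := Γ) v
      set g := rel Γ v
      have hα1 : α₁ v = α₁ (out Γ q) := alpha_eq_out Γ α₁ hper₁ v
      have hα2 : α₂ v = α₂ (out Γ q) := alpha_eq_out Γ α₂ hper₂ v
      have hα3 : α₃ v = α₃ (out Γ q) := alpha_eq_out Γ α₃ hper₃ v
      have hv1 : v + e₁ = (out Γ q + e₁) + (g : ℤ × ℤ) := by rw [hv]; ring
      have hv2 : v + e₂ = (out Γ q + e₂) + (g : ℤ × ℤ) := by rw [hv]; ring
      have hv0 : v = out Γ q + (g : ℤ × ℤ) := hv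
      rw [hα1, hα2, hα3, hv1, hv2, hv0,
        extend_monodromy hadd, extend_monodromy hadd, extend_monodromy hadd]
      have hx1 : extend Γ h f (out Γ q + e₁) = f (tau1 Γ q) * toH (h (rel2 Γ q)) := rfl
      have hx2 : extend Γ h f (out Γ q + e₂) = f (tau2 Γ q) * toH (h (rel3 Γ q)) := rfl
      have hx0 : extend Γ h f (out Γ q) = f q * toH (1 : ℂ) := by
        rw [extend_out hadd, toH_one, mul_one]
      rw [hx0, hx1, hx2]
      have E := congrArg (· * toH (h g)) (hsol q)
      simp only [add_mul, zero_mul, mul_assoc] at E ⊢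
      exact E
    · exact extend_monodromy hadd f

end SectionSys

section Kappa

variable {Γ : AddSubgroup (ℤ × ℤ)} (γ η : Γ)

/-- coordinates with respect to the basis `(γ, η)` of `Γ`. -/
def kap (hbasis : ∀ g : Γ, ∃! ab : ℤ × ℤ, g = ab.1 • γ + ab.2 • η) (g : Γ) : ℤ × ℤ :=
  (hbasis g).exists.choose

lemma kap_spec (hbasis : ∀ g : Γ, ∃! ab : ℤ × ℤ, g = ab.1 • γ + ab.2 • η) (g : Γ) :
    g = (kap γ η hbasis g).1 • γ + (kap γ η hbasis g).2 • η :=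
  (hbasis g).exists.choose_spec

lemma hval {h : Γ → ℂˣ} (hadd : ∀ a b : Γ, h (a + b) = h a * h b)
    (hbasis : ∀ g : Γ, ∃! ab : ℤ × ℤ, g = ab.1 • γ + ab.2 • η) (g : Γ) :
    h g = h γ ^ (kap γ η hbasis g).1 * h η ^ (kap γ η hbasis g).2 := by
  have h0 : h 0 = 1 := hom_zero hadd
  let F : Γ →+ Additive ℂˣ :=
    { toFun := fun g => Additive.ofMul (h g)
      map_zero' := by simp only [h0]; rfl
      map_add' := fun a b => by simp only [hadd a b]; rfl }
  calc h g = Additive.toMul (F g) := rfl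
    _ = Additive.toMul (F ((kap γ η hbasis g).1 • γ + (kap γ η hbasis g).2 • η)) := by
        rw [← kap_spec γ η hbasis g]
    _ = h γ ^ (kap γ η hbasis g).1 * h η ^ (kap γ η hbasis g).2 := by
        rw [map_add, map_zsmul, map_zsmul, toMul_add, toMul_zsmul, toMul_zsmul]
        rfl

end Kappa

section MaxPrinciple

open QHL

def lam (x : ℤ × ℤ) : ℤ := 2 * x.1 + x.2

lemma lam_add (x y : ℤ × ℤ) : lam (x + y) = lam x + lam y := by
  simp [lam, Prod.fst_add, Prod.snd_add]; ring

variable {Γ : AddSubgroup (ℤ × ℤ)}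

def hpow (t : ℂˣ) (g : Γ) : ℂˣ := t ^ lam (g : ℤ × ℤ)

lemma hpow_add (t : ℂˣ) (a b : Γ) : hpow t (a + b) = hpow t a * hpow t b := by
  rw [hpow, hpow, hpow, AddSubgroup.coe_add, lam_add, zpow_add]

lemma no_section_of_large [Fintype ((ℤ × ℤ) ⧸ Γ)] (α₁ α₂ α₃ : ℤ × ℤ → H)
    (h : Γ → ℂˣ) (T : ℝ) (hT1 : 1 ≤ T)
    (hTbig : ∀ v : ℤ × ℤ, ‖α₁ v‖ + ‖α₃ v‖ < T * ‖α₂ v‖)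
    (hvalT : ∀ g : Γ, ‖((h g : ℂ))‖ = T ^ lam (g : ℤ × ℤ))
    (ψ : ℤ × ℤ → H) (hψ : IsHoloSection Γ α₁ α₂ α₃ h ψ) : ψ = 0 := by
  have hT0 : (0 : ℝ) < T := lt_of_lt_of_le one_pos hT1
  by_contra hne
  -- the Γ-invariant size function
  set NN : (ℤ × ℤ) ⧸ Γ → ℝ := fun q => ‖ψ (out Γ q)‖ * T ^ (-(lam (out Γ q))) with hNN
  have key : ∀ x : ℤ × ℤ, ‖ψ x‖ = NN (QuotientAddGroup.mk x) * T ^ lam x := by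
    intro x
    have hx : ψ x = ψ (out Γ (QuotientAddGroup.mk x)) * toH (h (rel Γ x)) :=
      sect_apply hψ x
    have hlam : lam x = lam (out Γ (QuotientAddGroup.mk x)) + lam ((rel Γ x : ℤ × ℤ)) := by
      conv_lhs => rw [← out_add_rel Γ x]
      exact lam_add _ _
    have hzp : ∀ a b : ℤ, T ^ b = T ^ (-a) * T ^ (a + b) := by
      intro a b
      rw [← zpow_add₀ hT0.ne']
      congr 1
      ring
    rw [hx, norm_mul, norm_toH, hvalT, hlam]
    simp only [hNN]
    rw [hzp (lam (out Γ (QuotientAddGroup.mk x))) (lam ((rel Γ x : ℤ × ℤ)))]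
    ring
  -- maximizer
  obtain ⟨x₀, hx₀⟩ : ∃ x, ψ x ≠ 0 := by
    by_contra hc
    push_neg at hc
    exact hne (funext hc)
  haveI : Nonempty ((ℤ × ℤ) ⧸ Γ) := ⟨QuotientAddGroup.mk x₀⟩
  obtain ⟨qs, -, hmax⟩ := Finset.exists_max_image Finset.univ NN Finset.univ_nonempty
  have hmax' : ∀ q, NN q ≤ NN qs := fun q => hmax q (Finset.mem_univ q)
  have hNpos : 0 < NN qs := by
    have h1 : 0 < ‖ψ x₀‖ := norm_pos_iff.mpr hx₀
    rw [key x₀] at h1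
    have h2 : 0 < NN (QuotientAddGroup.mk x₀) := by
      by_contra hc
      push_neg at hc
      nlinarith [zpow_pos hT0 (lam x₀)]
    exact lt_of_lt_of_le h2 (hmax' _)
  -- the equation at v = out qs - e₁
  set v : ℤ × ℤ := out Γ qs - e₁ with hv
  have hv1 : v + e₁ = out Γ qs := by rw [hv]; ring
  have E := hψ.1 v
  have E2 : α₂ v * ψ (v + e₁) = -(α₁ v * ψ v + α₃ v * ψ (v + e₂)) := by
    have : (α₁ v * ψ v + α₃ v * ψ (v + e₂)) + α₂ v * ψ (v + e₁) = 0 := by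
      rw [← E]; ring_nf
      abel
    exact eq_neg_of_add_eq_zero_right this
  have Enorm : ‖α₂ v‖ * ‖ψ (v + e₁)‖ ≤ ‖α₁ v‖ * ‖ψ v‖ + ‖α₃ v‖ * ‖ψ (v + e₂)‖ := by
    rw [← norm_mul, E2, norm_neg]
    refine le_trans (norm_add_le _ _) ?_
    rw [norm_mul, norm_mul]
  -- exponents
  have hlamv : lam v = lam (out Γ qs) - 2 := by
    rw [hv]; simp [lam, Prod.fst_sub, Prod.snd_sub, e₁]; ring
  have hlamv2 : lam (v + e₂) = lam (out Γ qs) - 1 := by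
    rw [lam_add, hlamv]; simp [lam, e₂]; ring
  set lst : ℤ := lam (out Γ qs) with hlst
  set P : ℝ := NN qs * T ^ (lst - 1) with hP
  have hPpos : 0 < P := mul_pos hNpos (zpow_pos hT0 _)
  have bnd : ∀ x : ℤ × ℤ, lam x ≤ lst - 1 → ‖ψ x‖ ≤ NN qs * T ^ (lst - 1) := by
    intro x hx
    rw [key x]
    have h1 : T ^ lam x ≤ T ^ (lst - 1) := zpow_le_zpow_right₀ hT1 hx
    have h2 : NN (QuotientAddGroup.mk x) ≤ NN qs := hmax' _
    have h3 : (0:ℝ) ≤ NN (QuotientAddGroup.mk x) := by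
      have := norm_nonneg (ψ (out Γ (QuotientAddGroup.mk x)))
      exact mul_nonneg this (zpow_pos hT0 _).le
    nlinarith [zpow_pos hT0 (lam x), zpow_pos hT0 (lst - 1)]
  have hψv : ‖ψ v‖ ≤ NN qs * T ^ (lst - 1) := bnd v (by rw [hlamv]; omega)
  have hψv2 : ‖ψ (v + e₂)‖ ≤ NN qs * T ^ (lst - 1) := bnd (v + e₂) (by rw [hlamv2])
  have hψtop : ‖ψ (v + e₁)‖ = NN qs * (T * T ^ (lst - 1)) := by
    rw [hv1, key (out Γ qs)]
    have : (QuotientAddGroup.mk (out Γ qs) : (ℤ × ℤ) ⧸ Γ) = qs := mk_out Γ qs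
    rw [this, ← hlst]
    congr 1
    rw [← zpow_one_add₀ hT0.ne']
    congr 1
    omega
  -- final contradiction
  have big := hTbig v
  have hα2pos : 0 ≤ ‖α₂ v‖ := norm_nonneg _
  have h1 : ‖α₂ v‖ * (NN qs * (T * T ^ (lst - 1))) ≤ (‖α₁ v‖ + ‖α₃ v‖) * P := by
    rw [← hψtop]
    refine le_trans Enorm ?_
    rw [hP, add_mul]
    have a1 : ‖α₁ v‖ * ‖ψ v‖ ≤ ‖α₁ v‖ * (NN qs * T ^ (lst - 1)) :=
      mul_le_mul_of_nonneg_left hψv (norm_nonneg _)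
    have a3 : ‖α₃ v‖ * ‖ψ (v + e₂)‖ ≤ ‖α₃ v‖ * (NN qs * T ^ (lst - 1)) :=
      mul_le_mul_of_nonneg_left hψv2 (norm_nonneg _)
    linarith
  have h2 : (‖α₁ v‖ + ‖α₃ v‖) * P < (T * ‖α₂ v‖) * P := by
    exact mul_lt_mul_of_pos_right big hPpos
  have h3 : ‖α₂ v‖ * (NN qs * (T * T ^ (lst - 1))) = (T * ‖α₂ v‖) * P := by
    rw [hP]; ring
  rw [h3] at h1
  exact absurd (lt_of_le_of_lt h1 h2) (lt_irrefl _)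

end MaxPrinciple

section MoreHelpers

open QHL Matrix

variable {Q : Type}

lemma Mmat_smul {R : Type*} [CommRing R] [DecidableEq Q]
    (r : R) (m1 m2 m3 : Q → Matrix (Fin 2) (Fin 2) R) (τ1 τ2 : Q → Q) (c1 c2 c3 : Q → R) :
    r • Mmat m1 m2 m3 τ1 τ2 c1 c2 c3 =
      Mmat m1 m2 m3 τ1 τ2 (fun q => r * c1 q) (fun q => r * c2 q) (fun q => r * c3 q) := by
  ext p p'
  simp [Mmat, Matrix.smul_apply, smul_eq_mul, mul_add, mul_ite, mul_zero, mul_assoc]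

variable {A1 A2 A3 : Q → H} {τ1 τ2 : Q → Q}

lemma sysSol_coef_iff {c1 c2 c3 c1' c2' c3' u : Q → ℂ} (hu : ∀ q, u q ≠ 0)
    (h1 : ∀ q, c1' q = c1 q * u q) (h2 : ∀ q, c2' q = c2 q * u q)
    (h3 : ∀ q, c3' q = c3 q * u q) (f : Q → H) :
    SysSol A1 A2 A3 τ1 τ2 c1' c2' c3' f ↔ SysSol A1 A2 A3 τ1 τ2 c1 c2 c3 f := by
  have e1 : c1' = fun q => c1 q * u q := funext h1
  have e2 : c2' = fun q => c2 q * u q := funext h2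
  have e3 : c3' = fun q => c3 q * u q := funext h3
  rw [e1, e2, e3]
  exact sysSol_rowmul_iff hu f

lemma sys_kill_1 (hA : ∀ q, A1 q ≠ 0) (f : Q → H)
    (hsol : SysSol A1 A2 A3 τ1 τ2 (fun _ => 1) (fun _ => 0) (fun _ => 0) f) : f = 0 := by
  funext q
  have := hsol q
  simp only [toH_one, toH_zero, mul_one, mul_zero, add_zero] at this
  have := mul_eq_zero.mp this
  tauto

lemma sys_kill_2 (hA : ∀ q, A2 q ≠ 0) (hτ : Function.Surjective τ1) (f : Q → H)
    (hsol : SysSol A1 A2 A3 τ1 τ2 (fun _ => 0) (fun _ => 1) (fun _ => 0) f) : f = 0 := by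
  funext q
  obtain ⟨q', rfl⟩ := hτ q
  have := hsol q'
  simp only [toH_one, toH_zero, mul_one, mul_zero, add_zero, zero_add] at this
  have := mul_eq_zero.mp this
  tauto

end MoreHelpers

open QHL Matrix

/-- Lemma 4.13: the spectrum of a quaternionic holomorphic line bundle over a discrete
torus with regular combinatorics is a nonempty algebraic subset of
`Hom(Γ, ℂˣ) ≅ ℂˣ × ℂˣ`, cut out by one polynomial. -/
theorem spectrum_algebraic_nonempty
    (Γ : AddSubgroup (ℤ × ℤ)) (hΓ : Γ.index ≠ 0)
    (α₁ α₂ α₃ : ℤ × ℤ → H)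
    (hα₁ : ∀ x, α₁ x ≠ 0) (hα₂ : ∀ x, α₂ x ≠ 0) (hα₃ : ∀ x, α₃ x ≠ 0)
    (hper₁ : ∀ x : ℤ × ℤ, ∀ g : Γ, α₁ (x + (g : ℤ × ℤ)) = α₁ x)
    (hper₂ : ∀ x : ℤ × ℤ, ∀ g : Γ, α₂ (x + (g : ℤ × ℤ)) = α₂ x)
    (hper₃ : ∀ x : ℤ × ℤ, ∀ g : Γ, α₃ (x + (g : ℤ × ℤ)) = α₃ x)
    (γ η : Γ)
    (hbasis : ∀ g : Γ, ∃! ab : ℤ × ℤ, g = ab.1 • γ + ab.2 • η) :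
    (∃ p : MvPolynomial (Fin 2) ℂ, p ≠ 0 ∧
      ∀ h : Γ → ℂˣ, (∀ a b : Γ, h (a + b) = h a * h b) →
        ((∃ ψ : ℤ × ℤ → H, ψ ≠ 0 ∧ IsHoloSection Γ α₁ α₂ α₃ h ψ) ↔
          MvPolynomial.eval ![(h γ : ℂ), (h η : ℂ)] p = 0)) ∧
    (∃ h : Γ → ℂˣ, (∀ a b : Γ, h (a + b) = h a * h b) ∧
      ∃ ψ : ℤ × ℤ → H, ψ ≠ 0 ∧ IsHoloSection Γ α₁ α₂ α₃ h ψ) := by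
  classical
  have hcard : Nat.card ((ℤ × ℤ) ⧸ Γ) ≠ 0 := by rwa [AddSubgroup.index_eq_card] at hΓ
  haveI hfin : Finite ((ℤ × ℤ) ⧸ Γ) := (Nat.card_ne_zero.mp hcard).2
  haveI : Fintype ((ℤ × ℤ) ⧸ Γ) := Fintype.ofFinite _
  haveI hnem : Nonempty ((ℤ × ℤ) ⧸ Γ) := (Nat.card_ne_zero.mp hcard).1
  set kp : Γ → ℤ × ℤ := kap γ η hbasis with hkp
  -- a uniform bound for the exponents
  obtain ⟨Nb, hNb⟩ : ∃ Nb : ℕ, ∀ q : (ℤ × ℤ) ⧸ Γ,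
      0 ≤ (Nb : ℤ) + (kp (rel2 Γ q)).1 ∧ 0 ≤ (Nb : ℤ) + (kp (rel2 Γ q)).2 ∧
      0 ≤ (Nb : ℤ) + (kp (rel3 Γ q)).1 ∧ 0 ≤ (Nb : ℤ) + (kp (rel3 Γ q)).2 := by
    set F : (ℤ × ℤ) ⧸ Γ → ℕ := fun q => ((kp (rel2 Γ q)).1.natAbs + (kp (rel2 Γ q)).2.natAbs
      + (kp (rel3 Γ q)).1.natAbs + (kp (rel3 Γ q)).2.natAbs) with hF
    refine ⟨∑ q, F q, fun q => ?_⟩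
    have h1 : F q ≤ ∑ q, F q :=
      Finset.single_le_sum (fun i _ => Nat.zero_le _) (Finset.mem_univ q)
    have h2a : (kp (rel2 Γ q)).1.natAbs ≤ F q := by simp only [hF]; omega
    have h2b : (kp (rel2 Γ q)).2.natAbs ≤ F q := by simp only [hF]; omega
    have h2c : (kp (rel3 Γ q)).1.natAbs ≤ F q := by simp only [hF]; omega
    have h2d : (kp (rel3 Γ q)).2.natAbs ≤ F q := by simp only [hF]; omega
    omega
  -- the monomials
  set mono : ℤ × ℤ → MvPolynomial (Fin 2) ℂ := fun ab =>
    MvPolynomial.X 0 ^ ((Nb : ℤ) + ab.1).toNat * MvPolynomial.X 1 ^ ((Nb : ℤ) + ab.2).toNat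
    with hmono
  -- THE KEY EQUIVALENCE
  have key : ∀ (h : Γ → ℂˣ), (∀ a b : Γ, h (a + b) = h a * h b) →
      ((∃ ψ : ℤ × ℤ → H, ψ ≠ 0 ∧ IsHoloSection Γ α₁ α₂ α₃ h ψ) ↔
        MvPolynomial.eval ![(h γ : ℂ), (h η : ℂ)]
          ((Mmat (fun q => (mq (α₁ (out Γ q))).map MvPolynomial.C)
                 (fun q => (mq (α₂ (out Γ q))).map MvPolynomial.C)
                 (fun q => (mq (α₃ (out Γ q))).map MvPolynomial.C)
                 (tau1 Γ) (tau2 Γ)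
                 (fun _ => mono (0, 0)) (fun q => mono (kp (rel2 Γ q)))
                 (fun q => mono (kp (rel3 Γ q)))).det) = 0) := by
    intro h hadd
    have hz : (h γ : ℂ) ≠ 0 := Units.ne_zero _
    have hw : (h η : ℂ) ≠ 0 := Units.ne_zero _
    have hzp : ∀ (z : ℂ), z ≠ 0 → ∀ m : ℤ, 0 ≤ m → z ^ m.toNat = z ^ m := by
      intro z hz0 m hm
      rw [← zpow_natCast, Int.toNat_of_nonneg hm]
    have hcoef : ∀ g : Γ, ((h g : ℂˣ) : ℂ) = (h γ : ℂ) ^ (kp g).1 * (h η : ℂ) ^ (kp g).2 := by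
      intro g
      rw [hkp, hval γ η hadd hbasis g]
      simp [Units.val_mul, Units.val_zpow_eq_zpow_val]
    rw [RingHom.map_det, RingHom.mapMatrix_apply, Mmat_map]
    have hmm : ∀ β : ℤ × ℤ → H,
        (fun q => ((mq (β (out Γ q))).map MvPolynomial.C).map
            (MvPolynomial.eval ![(h γ : ℂ), (h η : ℂ)]))
          = fun q : (ℤ × ℤ) ⧸ Γ => mq (β (out Γ q)) := by
      intro β
      funext q
      ext a b
      simp [Matrix.map_apply]
    rw [hmm α₁, hmm α₂, hmm α₃, ← exists_sys_iff_det,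
      section_iff_sys Γ α₁ α₂ α₃ hper₁ hper₂ hper₃ hadd]
    set u : (ℤ × ℤ) ⧸ Γ → ℂ := fun _ => (h γ : ℂ) ^ (Nb : ℤ) * (h η : ℂ) ^ (Nb : ℤ) with hu
    have hune : ∀ q, u q ≠ 0 := fun q =>
      mul_ne_zero (zpow_ne_zero _ hz) (zpow_ne_zero _ hw)
    refine exists_congr fun f => and_congr_right fun _ => (sysSol_coef_iff hune ?_ ?_ ?_ f).symm
    · intro q
      simp only [Function.comp_apply, hmono, hu]
      simp [hzp _ hz _ (by omega : (0:ℤ) ≤ (Nb:ℤ) + (0,0).1),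
        hzp _ hw _ (by omega : (0:ℤ) ≤ (Nb:ℤ) + (0,0).2)]
    · intro q
      simp only [Function.comp_apply, hmono, hu]
      rw [_root_.map_mul, map_pow, map_pow, MvPolynomial.eval_X, MvPolynomial.eval_X]
      simp only [Matrix.cons_val_zero, Matrix.cons_val_one, Matrix.head_cons]
      rw [hzp _ hz _ (hNb q).1, hzp _ hw _ (hNb q).2.1, hcoef (rel2 Γ q),
        zpow_add₀ hz, zpow_add₀ hw]
      ring
    · intro q
      simp only [Function.comp_apply, hmono, hu]
      rw [_root_.map_mul, map_pow, map_pow, MvPolynomial.eval_X, MvPolynomial.eval_X]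
      simp only [Matrix.cons_val_zero, Matrix.cons_val_one, Matrix.head_cons]
      rw [hzp _ hz _ (hNb q).2.2.1, hzp _ hw _ (hNb q).2.2.2, hcoef (rel3 Γ q),
        zpow_add₀ hz, zpow_add₀ hw]
      ring
  obtain ⟨p, hpkey⟩ : ∃ p : MvPolynomial (Fin 2) ℂ,
      ∀ (h : Γ → ℂˣ), (∀ a b : Γ, h (a + b) = h a * h b) →
      ((∃ ψ : ℤ × ℤ → H, ψ ≠ 0 ∧ IsHoloSection Γ α₁ α₂ α₃ h ψ) ↔
        MvPolynomial.eval ![(h γ : ℂ), (h η : ℂ)] p = 0) := ⟨_, key⟩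
  -- PART 1 : p ≠ 0 via the maximum principle
  have hpne : p ≠ 0 := by
    obtain ⟨T, hT1, hTbig⟩ : ∃ T : ℝ, 1 ≤ T ∧ ∀ v, ‖α₁ v‖ + ‖α₃ v‖ < T * ‖α₂ v‖ := by
      set ratio : (ℤ × ℤ) ⧸ Γ → ℝ :=
        fun q => (‖α₁ (out Γ q)‖ + ‖α₃ (out Γ q)‖) / ‖α₂ (out Γ q)‖ with hratio
      obtain ⟨qC, -, hqC⟩ := Finset.exists_max_image Finset.univ ratio Finset.univ_nonempty
      refine ⟨max 1 (ratio qC) + 1, by linarith [le_max_left 1 (ratio qC)], ?_⟩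
      intro v
      have h1 : α₁ v = α₁ (out Γ (QuotientAddGroup.mk v)) := alpha_eq_out Γ α₁ hper₁ v
      have h2 : α₂ v = α₂ (out Γ (QuotientAddGroup.mk v)) := alpha_eq_out Γ α₂ hper₂ v
      have h3 : α₃ v = α₃ (out Γ (QuotientAddGroup.mk v)) := alpha_eq_out Γ α₃ hper₃ v
      set q := QuotientAddGroup.mk (s := Γ) v
      have hα2pos : 0 < ‖α₂ (out Γ q)‖ := norm_pos_iff.mpr (hα₂ _)
      have hle : ratio q ≤ ratio qC := hqC q (Finset.mem_univ q)
      have hlt : ratio q < max 1 (ratio qC) + 1 :=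
        lt_of_le_of_lt (le_trans hle (le_max_right 1 _)) (by linarith)
      have heq : ‖α₁ (out Γ q)‖ + ‖α₃ (out Γ q)‖ = ratio q * ‖α₂ (out Γ q)‖ := by
        rw [hratio]
        field_simp
      rw [h1, h2, h3, heq]
      exact mul_lt_mul_of_pos_right hlt hα2pos
    have hT0 : (0:ℝ) < T := lt_of_lt_of_le one_pos hT1
    have hTne : ((T : ℝ) : ℂ) ≠ 0 := by
      simp only [ne_eq, Complex.ofReal_eq_zero]
      exact hT0.ne'
    set uT : ℂˣ := Units.mk0 ((T : ℝ) : ℂ) hTne with huT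
    have hvalT : ∀ g : Γ, ‖((hpow uT g : ℂˣ) : ℂ)‖ = T ^ lam (g : ℤ × ℤ) := by
      intro g
      rw [hpow]
      rw [Units.val_zpow_eq_zpow_val]
      rw [norm_zpow]
      simp [huT, Complex.norm_real, abs_of_pos hT0]
    intro h0
    have hnosec := no_section_of_large (Γ := Γ) α₁ α₂ α₃ (hpow uT) T hT1 hTbig hvalT
    have := (hpkey (hpow uT) (hpow_add uT)).mpr (by rw [h0]; simp)
    obtain ⟨ψ, hne, hψ⟩ := this
    exact hne (hnosec ψ hψ)
  refine ⟨⟨p, hpne, hpkey⟩, ?_⟩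
  -- PART 2 : the spectrum is nonempty
  set TP : Polynomial ℂ := Polynomial.X with hTP
  have hdet_eval : ∀ (t : ℂ) (c1 c2 c3 : (ℤ × ℤ) ⧸ Γ → Polynomial ℂ)
      (d1 d2 d3 : (ℤ × ℤ) ⧸ Γ → ℂ),
      (∀ q, (c1 q).eval t = d1 q) → (∀ q, (c2 q).eval t = d2 q) → (∀ q, (c3 q).eval t = d3 q) →
      Polynomial.eval t (Mmat (fun q => (mq (α₁ (out Γ q))).map Polynomial.C)
          (fun q => (mq (α₂ (out Γ q))).map Polynomial.C)
          (fun q => (mq (α₃ (out Γ q))).map Polynomial.C)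
          (tau1 Γ) (tau2 Γ) c1 c2 c3).det
        = (Mmat (fun q => mq (α₁ (out Γ q))) (fun q => mq (α₂ (out Γ q)))
            (fun q => mq (α₃ (out Γ q))) (tau1 Γ) (tau2 Γ) d1 d2 d3).det := by
    intro t c1 c2 c3 d1 d2 d3 h1 h2 h3
    rw [← Polynomial.coe_evalRingHom, RingHom.map_det, RingHom.mapMatrix_apply, Mmat_map]
    have hmm : ∀ β : ℤ × ℤ → H,
        (fun q => ((mq (β (out Γ q))).map ⇑Polynomial.C).map ⇑(Polynomial.evalRingHom t))
          = fun q : (ℤ × ℤ) ⧸ Γ => mq (β (out Γ q)) := by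
      intro β
      funext q
      ext a b
      simp [Matrix.map_apply]
    have e1 : ⇑(Polynomial.evalRingHom t) ∘ c1 = d1 := funext fun q => h1 q
    have e2 : ⇑(Polynomial.evalRingHom t) ∘ c2 = d2 := funext fun q => h2 q
    have e3 : ⇑(Polynomial.evalRingHom t) ∘ c3 = d3 := funext fun q => h3 q
    rw [hmm α₁, hmm α₂, hmm α₃, e1, e2, e3]
  set fpoly : Polynomial ℂ :=
    (Mmat (fun q => (mq (α₁ (out Γ q))).map Polynomial.C)
      (fun q => (mq (α₂ (out Γ q))).map Polynomial.C)
      (fun q => (mq (α₃ (out Γ q))).map Polynomial.C)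
      (tau1 Γ) (tau2 Γ) (fun _ => 1) (fun _ => TP ^ 2) (fun _ => TP)).det with hfpoly
  set gpoly : Polynomial ℂ :=
    (Mmat (fun q => (mq (α₁ (out Γ q))).map Polynomial.C)
      (fun q => (mq (α₂ (out Γ q))).map Polynomial.C)
      (fun q => (mq (α₃ (out Γ q))).map Polynomial.C)
      (tau1 Γ) (tau2 Γ) (fun _ => TP ^ 2) (fun _ => 1) (fun _ => TP)).det with hgpoly
  have hf0 : Polynomial.eval 0 fpoly ≠ 0 := by
    rw [hfpoly, hdet_eval 0 _ _ _ (fun _ => (1 : ℂ)) (fun _ => (0 : ℂ)) (fun _ => (0 : ℂ))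
      (by simp) (by simp [hTP]) (by simp [hTP])]
    intro h0
    obtain ⟨f, hfne, hsol⟩ := (exists_sys_iff_det _ _ _ _ _ _ _ _).mpr h0
    exact hfne (sys_kill_1 (fun q => hα₁ _) f hsol)
  have hg0 : Polynomial.eval 0 gpoly ≠ 0 := by
    rw [hgpoly, hdet_eval 0 _ _ _ (fun _ => (0 : ℂ)) (fun _ => (1 : ℂ)) (fun _ => (0 : ℂ))
      (by simp [hTP]) (by simp) (by simp [hTP])]
    intro h0
    obtain ⟨f, hfne, hsol⟩ := (exists_sys_iff_det _ _ _ _ _ _ _ _).mpr h0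
    exact hfne (sys_kill_2 (fun q => hα₂ _) (tau1_surj Γ) f hsol)
  set k2 : ℕ := Fintype.card (((ℤ × ℤ) ⧸ Γ) × Fin 2) with hk2
  have hk2pos : 0 < k2 := Fintype.card_pos
  have hroot : ∃ t₀ : ℂ, t₀ ≠ 0 ∧ Polynomial.eval t₀ fpoly = 0 := by
    by_contra hcon
    push_neg at hcon
    have hnoroot : ∀ t : ℂ, ¬ fpoly.IsRoot t := by
      intro t ht
      rcases eq_or_ne t 0 with rfl | htne
      · exact hf0 ht
      · exact hcon t htne ht
    have hdeg : fpoly.degree ≤ 0 := by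
      by_contra hd
      push_neg at hd
      obtain ⟨t, ht⟩ := IsAlgClosed.exists_root fpoly hd.ne'
      exact hnoroot t ht
    obtain ⟨c, hc⟩ : ∃ c, fpoly = Polynomial.C c :=
      ⟨_, Polynomial.eq_C_of_degree_le_zero hdeg⟩
    have hcne : c ≠ 0 := by
      intro h0
      apply hf0
      rw [hc, h0]
      try simp
    have hrel : ∀ t : ℂ, t ≠ 0 → Polynomial.eval t gpoly = c * t ^ (2 * k2) := by
      intro t ht
      rw [hgpoly, hdet_eval t _ _ _ (fun _ => t ^ 2) (fun _ => (1 : ℂ)) (fun _ => t)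
        (by simp [hTP]) (by simp) (by simp [hTP])]
      have hsmul : (Mmat (fun q => mq (α₁ (out Γ q))) (fun q => mq (α₂ (out Γ q)))
            (fun q => mq (α₃ (out Γ q))) (tau1 Γ) (tau2 Γ)
            (fun _ => t ^ 2) (fun _ => (1 : ℂ)) (fun _ => t))
          = (t ^ 2) • Mmat (fun q => mq (α₁ (out Γ q))) (fun q => mq (α₂ (out Γ q)))
            (fun q => mq (α₃ (out Γ q))) (tau1 Γ) (tau2 Γ)
            (fun _ => (1 : ℂ)) (fun _ => t⁻¹ ^ 2) (fun _ => t⁻¹) := by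
        rw [Mmat_smul]
        rw [show (fun _ : (ℤ × ℤ) ⧸ Γ => t ^ 2 * (1 : ℂ)) = (fun _ => t ^ 2) from
            funext fun _ => by ring,
          show (fun _ : (ℤ × ℤ) ⧸ Γ => t ^ 2 * t⁻¹ ^ 2) = (fun _ => (1 : ℂ)) from
            funext fun _ => by rw [← mul_pow, mul_inv_cancel₀ ht, one_pow],
          show (fun _ : (ℤ × ℤ) ⧸ Γ => t ^ 2 * t⁻¹) = (fun _ => t) from
            funext fun _ => by rw [pow_two, mul_assoc, mul_inv_cancel₀ ht, mul_one]]
      rw [hsmul, Matrix.det_smul]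
      have hval2 : (Mmat (fun q => mq (α₁ (out Γ q))) (fun q => mq (α₂ (out Γ q)))
            (fun q => mq (α₃ (out Γ q))) (tau1 Γ) (tau2 Γ)
            (fun _ => (1 : ℂ)) (fun _ => t⁻¹ ^ 2) (fun _ => t⁻¹)).det = c := by
        rw [← hdet_eval t⁻¹ (fun _ => 1) (fun _ => TP ^ 2) (fun _ => TP) _ _ _
          (by simp) (by simp [hTP]) (by simp [hTP]), ← hfpoly, hc]
        try simp
      rw [hval2, ← pow_mul, ← hk2]
      ring
    have hginf : gpoly = Polynomial.C c * Polynomial.X ^ (2 * k2) := by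
      apply Polynomial.eq_of_infinite_eval_eq
      apply Set.Infinite.mono (s := {t : ℂ | t ≠ 0})
      · intro t ht
        simp only [Set.mem_setOf_eq] at ht ⊢
        rw [hrel t ht]
        try simp
      · have h0c : ({(0 : ℂ)}ᶜ : Set ℂ).Infinite := (Set.finite_singleton 0).infinite_compl
        convert h0c using 1
        rfl
    apply hg0
    rw [hginf]
    have h2k : 2 * k2 ≠ 0 := by omega
    simp [zero_pow h2k]
  obtain ⟨t₀, ht₀, hfroot⟩ := hroot
  have hdet0 : (Mmat (fun q => mq (α₁ (out Γ q))) (fun q => mq (α₂ (out Γ q)))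
      (fun q => mq (α₃ (out Γ q))) (tau1 Γ) (tau2 Γ)
      (fun _ => (1 : ℂ)) (fun _ => t₀ ^ 2) (fun _ => t₀)).det = 0 := by
    rw [← hdet_eval t₀ (fun _ => 1) (fun _ => TP ^ 2) (fun _ => TP) _ _ _
      (by simp) (by simp [hTP]) (by simp [hTP]), ← hfpoly]
    exact hfroot
  obtain ⟨f, hfne, hsol⟩ := (exists_sys_iff_det _ _ _ _ _ _ _ _).mpr hdet0
  set u₀ : ℂˣ := Units.mk0 t₀ ht₀ with hu₀
  set w : (ℤ × ℤ) ⧸ Γ → ℂ := fun q => t₀ ^ lam (out Γ q) with hw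
  have hwne : ∀ q, w q ≠ 0 := fun q => zpow_ne_zero _ ht₀
  have hcoe : ∀ g : Γ, ((hpow u₀ g : ℂˣ) : ℂ) = t₀ ^ lam (g : ℤ × ℤ) := by
    intro g
    rw [hpow, Units.val_zpow_eq_zpow_val]
    simp [hu₀]
  have hlam2 : ∀ q, lam ((rel2 Γ q : ℤ × ℤ)) = lam (out Γ q) + 2 - lam (out Γ (tau1 Γ q)) := by
    intro q
    show lam (out Γ q + e₁ - out Γ (tau1 Γ q)) = _
    simp only [lam, e₁, Prod.fst_add, Prod.snd_add, Prod.fst_sub, Prod.snd_sub]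
    ring
  have hlam3 : ∀ q, lam ((rel3 Γ q : ℤ × ℤ)) = lam (out Γ q) + 1 - lam (out Γ (tau2 Γ q)) := by
    intro q
    show lam (out Γ q + e₂ - out Γ (tau2 Γ q)) = _
    simp only [lam, e₂, Prod.fst_add, Prod.snd_add, Prod.fst_sub, Prod.snd_sub]
    ring
  have goal2 : ∀ B a : ℤ, t₀ ^ B * t₀ ^ (a + 2 - B) = t₀ ^ 2 * t₀ ^ a := by
    intro B a
    calc t₀ ^ B * t₀ ^ (a + 2 - B) = t₀ ^ (1 + (1 + a)) := by
          rw [← zpow_add₀ ht₀]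
          congr 1
          ring
      _ = t₀ * (t₀ * t₀ ^ a) := by rw [zpow_one_add₀ ht₀, zpow_one_add₀ ht₀]
      _ = t₀ ^ 2 * t₀ ^ a := by ring
  have goal3 : ∀ B a : ℤ, t₀ ^ B * t₀ ^ (a + 1 - B) = t₀ * t₀ ^ a := by
    intro B a
    calc t₀ ^ B * t₀ ^ (a + 1 - B) = t₀ ^ (1 + a) := by
          rw [← zpow_add₀ ht₀]
          congr 1
          ring
      _ = t₀ * t₀ ^ a := zpow_one_add₀ ht₀ a
  have hsol' : SysSol (fun q => α₁ (out Γ q)) (fun q => α₂ (out Γ q)) (fun q => α₃ (out Γ q))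
      (tau1 Γ) (tau2 Γ) (fun _ => 1)
      (fun q => ((hpow u₀ (rel2 Γ q) : ℂˣ) : ℂ)) (fun q => ((hpow u₀ (rel3 Γ q) : ℂˣ) : ℂ))
      (fun q => f q * toH (w q)) := by
    refine sysSol_gauge ?_ ?_ ?_ hsol
    · intro q
      ring
    · intro q
      rw [hcoe, hlam2 q]
      exact goal2 _ _
    · intro q
      rw [hcoe, hlam3 q]
      exact goal3 _ _
  have hfne' : (fun q => f q * toH (w q)) ≠ 0 := by
    intro h0
    apply hfne
    funext q
    have hq := congrFun h0 q
    simp only [Pi.zero_apply] at hq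
    rcases mul_eq_zero.mp hq with hx | hx
    · exact hx
    · exact absurd (toH_eq_zero.mp hx) (hwne q)
  exact ⟨hpow u₀, hpow_add u₀,
    (section_iff_sys Γ α₁ α₂ α₃ hper₁ hper₂ hper₃ (hpow_add u₀)).mpr ⟨_, hfne', hsol'⟩⟩
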